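/- Let F(y) = \sum_{i=1}^k w_i e^{a_i y + (1/2) b_i y^2} and \tilde{F}(y) = \sum_{i=1}^k \tilde{w}_i e^{\tilde{a}_i y + (1/2) \tilde{b}_i y^2} be formal power series in y over a commutative Q-algebra, and suppose the b_i are pairwise distinct and the \tilde{b}_i are pairwise distinct. Define D_i = \partial_y - (a_i + y b_i) and \tilde{D}_i = \partial_y - (\tilde{a}_i + y \tilde{b}_i). Then evaluating \tilde{D}_k^{2^{2k-1}-1} \tilde{D}_{k-1}^{2^{2k-2}} \cdots \tilde{D}_1^{2^k} D_k^{2^{k-1}} \cdots D_1^{1} (\tilde{F}) at y = 0 gives C_k · \tilde{w}_k · \prod_{i=1}^k (\tilde{b}_k - b_i)^{2^{i-1}} · \prod_{i=1}^{k-1} (\tilde{b}_k - \tilde{b}_i)^{2^{k+i-1}}, where C_k = (2^{2k-1}-1)! depends only on k. -/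

import Mathlib

open PowerSeries

variable {R : Type*} [CommRing R] [Algebra ℚ R]

/-- Coefficients of the formal power series `e^{a y + (1/2) b y²}` in `y`. -/
noncomputable def expCoeff (a b : R) : ℕ → R
  | 0 => 1
  | 1 => a
  | (n + 2) => algebraMap ℚ R (((n : ℚ) + 2)⁻¹) *
      (a * expCoeff a b (n + 1) + b * expCoeff a b n)

/-- The formal power series `e^{a y + (1/2) b y²}` in `y`. -/
noncomputable def expAB (a b : R) : PowerSeries R := PowerSeries.mk (expCoeff a b)

/-- The differential operator `D = ∂_y - (a + y b)` on formal power series in `y`. -/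
noncomputable def Dop (a b : R) (f : PowerSeries R) : PowerSeries R :=
  f.derivativeFun - (PowerSeries.C a + PowerSeries.X * PowerSeries.C b) * f

/-- `iterOpsE D e n = (D_{n-1})^{e(n-1)} ∘ ⋯ ∘ (D_0)^{e(0)}` (0-indexed, applied
rightmost-first). -/
noncomputable def iterOpsE {M : Type*} (D : ℕ → M → M) (e : ℕ → ℕ) : ℕ → M → M
  | 0 => id
  | (n + 1) => (D n)^[e n] ∘ iterOpsE D e n

theorem coeff_derivativeFun' (f : PowerSeries R) (n : ℕ) :
    PowerSeries.coeff n f.derivativeFun = PowerSeries.coeff (n + 1) f * (n + 1) :=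
  PowerSeries.coeff_derivative f n

/-- derivative of expAB -/
theorem expAB_deriv (a b : R) :
    (expAB a b).derivativeFun
      = (PowerSeries.C a + PowerSeries.X * PowerSeries.C b) * expAB a b := by
  ext n
  rw [coeff_derivativeFun', add_mul, map_add, PowerSeries.coeff_C_mul, mul_assoc]
  cases n with
  | zero =>
    simp [expAB, expCoeff, PowerSeries.coeff_zero_X_mul]
  | succ n =>
    rw [PowerSeries.coeff_succ_X_mul, PowerSeries.coeff_C_mul]
    simp only [expAB, PowerSeries.coeff_mk]
    have hc : (((n+1 : ℕ) : R) + 1) = ((n + 2 : ℕ) : R) := by push_cast; ring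
    rw [hc]
    rw [show expCoeff a b (n + 2) = algebraMap ℚ R (((n : ℚ) + 2)⁻¹) *
      (a * expCoeff a b (n + 1) + b * expCoeff a b n) from rfl]
    have h2 : ((n + 2 : ℕ) : R) = algebraMap ℚ R ((n : ℚ) + 2) := by
      rw [show ((n : ℚ) + 2) = ((n + 2 : ℕ) : ℚ) by push_cast; ring, map_natCast]
    rw [h2]
    have hq : ((n : ℚ) + 2) ≠ 0 := by positivity
    rw [mul_comm, ← mul_assoc, ← map_mul, mul_inv_cancel₀ hq, map_one, one_mul]

/-- The induced operator on the polynomial factor. -/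
noncomputable def Lop (a b d c : R) (P : PowerSeries R) : PowerSeries R :=
  P.derivativeFun + (PowerSeries.C (a - d) + PowerSeries.X * PowerSeries.C (b - c)) * P

theorem Dop_mul_expAB (a b d c : R) (P : PowerSeries R) :
    Dop d c (P * expAB a b) = Lop a b d c P * expAB a b := by
  unfold Dop Lop
  rw [PowerSeries.derivativeFun_mul, expAB_deriv]
  push_cast [map_sub]
  simp only [smul_eq_mul]
  ring

theorem Dop_iter_mul_expAB (a b d c : R) (t : ℕ) (P : PowerSeries R) :
    (Dop d c)^[t] (P * expAB a b) = (Lop a b d c)^[t] P * expAB a b := by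
  induction t with
  | zero => rfl
  | succ t ih => rw [Function.iterate_succ_apply', Function.iterate_succ_apply', ih,
      Dop_mul_expAB]

theorem iterOpsE_mul_expAB (a b : R) (d c : ℕ → R) (e : ℕ → ℕ) (n : ℕ) (P : PowerSeries R) :
    iterOpsE (fun j => Dop (d j) (c j)) e n (P * expAB a b)
      = iterOpsE (fun j => Lop a b (d j) (c j)) e n P * expAB a b := by
  induction n with
  | zero => rfl
  | succ n ih => simp only [iterOpsE, Function.comp_apply, ih, Dop_iter_mul_expAB]

/-- coefficient bound predicate -/
def Bdd (n : ℕ) (P : PowerSeries R) : Prop := ∀ m, n < m → PowerSeries.coeff m P = 0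

theorem coeff_Lop (a b d c : R) (P : PowerSeries R) (m : ℕ) :
    PowerSeries.coeff (m + 1) (Lop a b d c P)
      = PowerSeries.coeff (m + 2) P * ((m : R) + 2) + (a - d) * PowerSeries.coeff (m + 1) P
        + (b - c) * PowerSeries.coeff m P := by
  unfold Lop
  rw [map_add, coeff_derivativeFun', add_mul, map_add, PowerSeries.coeff_C_mul,
    mul_assoc, PowerSeries.coeff_succ_X_mul, PowerSeries.coeff_C_mul]
  push_cast
  ring

theorem Bdd_Lop {n : ℕ} {P : PowerSeries R} (h : Bdd n P) (a b d c : R) :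
    Bdd (n + 1) (Lop a b d c P) := by
  intro m hm
  obtain ⟨m, rfl⟩ : ∃ m', m = m' + 1 := ⟨m - 1, by omega⟩
  rw [coeff_Lop, h _ (by omega), h _ (by omega), h _ (by omega)]
  ring

theorem coeff_Lop_top {n : ℕ} {P : PowerSeries R} (h : Bdd n P) (a b d c : R) :
    PowerSeries.coeff (n + 1) (Lop a b d c P) = (b - c) * PowerSeries.coeff n P := by
  rw [coeff_Lop, h _ (by omega), h _ (by omega)]
  ring

theorem Lop_iter_track {n : ℕ} {P : PowerSeries R} (h : Bdd n P) (a b d c : R) (t : ℕ) :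
    Bdd (n + t) ((Lop a b d c)^[t] P) ∧
      PowerSeries.coeff (n + t) ((Lop a b d c)^[t] P)
        = (b - c) ^ t * PowerSeries.coeff n P := by
  induction t with
  | zero => simpa using h
  | succ t ih =>
    rw [Function.iterate_succ_apply']
    refine ⟨by rw [show n + (t+1) = (n+t) + 1 by ring]; exact Bdd_Lop ih.1 a b d c, ?_⟩
    rw [show n + (t+1) = (n+t) + 1 by ring, coeff_Lop_top ih.1, ih.2, pow_succ]
    ring

theorem Lop_matched (a b : R) : Lop a b a b = PowerSeries.derivativeFun := by
  funext P
  unfold Lop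
  simp

theorem derivativeFun_zero' : (0 : PowerSeries R).derivativeFun = 0 := by
  ext m
  simp [coeff_derivativeFun']

theorem Bdd_derivativeFun {n : ℕ} {P : PowerSeries R} (h : Bdd (n + 1) P) :
    Bdd n P.derivativeFun := by
  intro m hm
  rw [coeff_derivativeFun', h _ (by omega), zero_mul]

theorem deriv_iter_zero {n : ℕ} {P : PowerSeries R} (h : Bdd n P) {t : ℕ} (ht : n < t) :
    PowerSeries.derivativeFun^[t] P = 0 := by
  have key : ∀ n (P : PowerSeries R), Bdd n P →
      PowerSeries.derivativeFun^[n + 1] P = 0 := by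
    intro n
    induction n with
    | zero =>
      intro P h
      ext m
      rw [Function.iterate_one, coeff_derivativeFun', h (m+1) (by omega),
        zero_mul, map_zero]
    | succ n ih =>
      intro P h
      rw [Function.iterate_succ_apply]
      exact ih _ (Bdd_derivativeFun h)
  obtain ⟨s, rfl⟩ : ∃ s, t = s + (n + 1) := ⟨t - (n+1), by omega⟩
  rw [Function.iterate_add_apply, key n P h]
  exact Function.iterate_fixed derivativeFun_zero' s

theorem coeff_zero_deriv_iter (t : ℕ) (P : PowerSeries R) :
    PowerSeries.coeff 0 (PowerSeries.derivativeFun^[t] P)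
      = (t.factorial : R) * PowerSeries.coeff t P := by
  induction t generalizing P with
  | zero => simp
  | succ t ih =>
    rw [Function.iterate_succ_apply, ih, coeff_derivativeFun',
      Nat.factorial_succ]
    push_cast
    ring

/-- tracking through an iterOpsE of Lops -/
theorem iterOpsE_Lop_track (a b : R) (d c : ℕ → R) (e : ℕ → ℕ) {n₀ : ℕ} {P : PowerSeries R}
    (h : Bdd n₀ P) (m : ℕ) :
    Bdd (n₀ + ∑ j ∈ Finset.range m, e j)
        (iterOpsE (fun j => Lop a b (d j) (c j)) e m P) ∧
      PowerSeries.coeff (n₀ + ∑ j ∈ Finset.range m, e j)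
          (iterOpsE (fun j => Lop a b (d j) (c j)) e m P)
        = (∏ j ∈ Finset.range m, (b - c j) ^ e j) * PowerSeries.coeff n₀ P := by
  induction m with
  | zero =>
    simp only [iterOpsE, id_eq, Finset.range_zero, Finset.sum_empty, Finset.prod_empty,
      add_zero, one_mul]
    exact ⟨h, trivial⟩
  | succ m ih =>
    simp only [iterOpsE, Function.comp_apply, Finset.sum_range_succ, Finset.prod_range_succ,
      ← add_assoc]
    obtain ⟨ih1, ih2⟩ := ih
    obtain ⟨t1, t2⟩ := Lop_iter_track ih1 a b (d m) (c m) (e m)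
    exact ⟨t1, by rw [t2, ih2]; ring⟩

theorem Lop_zero (a b d c : R) : Lop a b d c 0 = 0 := by
  unfold Lop
  rw [derivativeFun_zero', mul_zero, add_zero]

theorem iterOpsE_eq_zero {D : ℕ → PowerSeries R → PowerSeries R} {e : ℕ → ℕ}
    (hD : ∀ j, D j 0 = 0) {m n : ℕ} (hmn : m ≤ n)
    {P : PowerSeries R} (h : iterOpsE D e m P = 0) : iterOpsE D e n P = 0 := by
  induction n with
  | zero => rw [show m = 0 by omega] at h; exact h
  | succ n ih =>
    rcases Nat.lt_or_ge m (n+1) with hlt | hge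
    · simp only [iterOpsE, Function.comp_apply, ih (by omega)]
      exact Function.iterate_fixed (hD n) (e n)
    · rw [show m = n + 1 by omega] at h; exact h

theorem Dop_add (d c : R) (f g : PowerSeries R) :
    Dop d c (f + g) = Dop d c f + Dop d c g := by
  unfold Dop
  rw [PowerSeries.derivativeFun_add]
  ring

theorem Dop_zero (d c : R) : Dop d c 0 = 0 := by
  unfold Dop
  rw [derivativeFun_zero', mul_zero, zero_sub, neg_zero]

theorem Dop_iter_add (d c : R) (t : ℕ) (f g : PowerSeries R) :
    (Dop d c)^[t] (f + g) = (Dop d c)^[t] f + (Dop d c)^[t] g := by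
  induction t generalizing f g with
  | zero => rfl
  | succ t ih => rw [Function.iterate_succ_apply, Function.iterate_succ_apply,
      Function.iterate_succ_apply, Dop_add, ih]

theorem iterOpsE_Dop_add (d c : ℕ → R) (e : ℕ → ℕ) (n : ℕ) (f g : PowerSeries R) :
    iterOpsE (fun j => Dop (d j) (c j)) e n (f + g)
      = iterOpsE (fun j => Dop (d j) (c j)) e n f
        + iterOpsE (fun j => Dop (d j) (c j)) e n g := by
  induction n generalizing f g with
  | zero => rfl
  | succ n ih => simp only [iterOpsE, Function.comp_apply, ih, Dop_iter_add]

theorem iterOpsE_Dop_zero (d c : ℕ → R) (e : ℕ → ℕ) (n : ℕ) :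
    iterOpsE (fun j => Dop (d j) (c j)) e n 0 = 0 := by
  induction n with
  | zero => rfl
  | succ n ih =>
    simp only [iterOpsE, Function.comp_apply, ih]
    exact Function.iterate_fixed (Dop_zero _ _) _

theorem iterOpsE_Dop_sum (d c : ℕ → R) (e : ℕ → ℕ) (n : ℕ) {ι : Type*} (s : Finset ι)
    (f : ι → PowerSeries R) :
    iterOpsE (fun j => Dop (d j) (c j)) e n (∑ i ∈ s, f i)
      = ∑ i ∈ s, iterOpsE (fun j => Dop (d j) (c j)) e n (f i) := by
  classical
  induction s using Finset.induction with
  | empty => simpa using iterOpsE_Dop_zero d c e n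
  | insert _ _ hx ih =>
    rw [Finset.sum_insert hx, Finset.sum_insert hx, iterOpsE_Dop_add, ih]

theorem Dop_iter_sum (d c : R) (t : ℕ) {ι : Type*} (s : Finset ι) (f : ι → PowerSeries R) :
    (Dop d c)^[t] (∑ i ∈ s, f i) = ∑ i ∈ s, (Dop d c)^[t] (f i) := by
  classical
  induction s using Finset.induction with
  | empty => simpa using Function.iterate_fixed (Dop_zero d c) t
  | insert _ _ hx ih =>
    rw [Finset.sum_insert hx, Finset.sum_insert hx, Dop_iter_add, ih]

theorem sum_two_pow (m : ℕ) : ∑ j ∈ Finset.range m, 2 ^ j = 2 ^ m - 1 := by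
  induction m with
  | zero => rfl
  | succ m ih =>
    rw [Finset.sum_range_succ, ih]
    have := Nat.one_le_two_pow (n := m)
    have := Nat.pow_succ 2 m
    omega

theorem sum_two_pow_shift (k m : ℕ) :
    (2 ^ k - 1) + ∑ j ∈ Finset.range m, 2 ^ (k + j) = 2 ^ (k + m) - 1 := by
  induction m with
  | zero => simp
  | succ m ih =>
    rw [Finset.sum_range_succ, ← add_assoc, ih]
    have := Nat.one_le_two_pow (n := k + m)
    have := Nat.pow_succ 2 (k + m)
    have : 2 ^ (k + (m + 1)) = 2 ^ (k + m) * 2 := by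
      rw [show k + (m + 1) = (k + m) + 1 by omega, Nat.pow_succ]
    omega

theorem Bdd_C (r : R) : Bdd 0 (PowerSeries.C r) := by
  intro m hm
  rw [PowerSeries.coeff_C, if_neg (by omega)]

theorem constantCoeff_expAB (a b : R) : PowerSeries.constantCoeff (expAB a b) = 1 := by
  rw [← PowerSeries.coeff_zero_eq_constantCoeff_apply]
  simp [expAB, expCoeff]

/-- Evaluating `D̃_k^{2^{2k-1}-1} D̃_{k-1}^{2^{2k-2}} ⋯ D̃_1^{2^k} D_k^{2^{k-1}} ⋯ D_1^{1} (F̃)`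
at `y = 0` (i.e. taking the constant coefficient) gives
`C_k · w̃_k · ∏_{i=1}^k (b̃_k - b_i)^{2^{i-1}} · ∏_{i=1}^{k-1} (b̃_k - b̃_i)^{2^{k+i-1}}`
with `C_k = (2^{2k-1}-1)!`, assuming the `b_i` are pairwise distinct and the `b̃_i` are
pairwise distinct.  (Components here are 0-indexed: component `i-1` is the `i`-th one.) -/
theorem stmt13 (k : ℕ) (hk : 1 ≤ k) (w a b tw ta tb : ℕ → R)
    (hb : ∀ i j, i < k → j < k → i ≠ j → b i ≠ b j)
    (htb : ∀ i j, i < k → j < k → i ≠ j → tb i ≠ tb j) :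
    PowerSeries.constantCoeff
      ((Dop (ta (k - 1)) (tb (k - 1)))^[2 ^ (2 * k - 1) - 1]
        (iterOpsE (fun i => Dop (ta i) (tb i)) (fun i => 2 ^ (k + i)) (k - 1)
          (iterOpsE (fun i => Dop (a i) (b i)) (fun i => 2 ^ i) k
            (∑ i ∈ Finset.range k, PowerSeries.C (tw i) * expAB (ta i) (tb i)))))
    = ((2 ^ (2 * k - 1) - 1).factorial : R) * tw (k - 1)
        * (∏ i ∈ Finset.range k, (tb (k - 1) - b i) ^ (2 ^ i))
        * (∏ i ∈ Finset.range (k - 1), (tb (k - 1) - tb i) ^ (2 ^ (k + i))) := by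
  classical
  set M := 2 ^ (2 * k - 1) - 1 with hMdef
  -- polynomial representatives
  set Q1 : ℕ → PowerSeries R := fun i =>
    iterOpsE (fun j => Lop (ta i) (tb i) (a j) (b j)) (fun j => 2 ^ j) k
      (PowerSeries.C (tw i)) with hQ1def
  set Q2 : ℕ → ℕ → PowerSeries R := fun i m =>
    iterOpsE (fun j => Lop (ta i) (tb i) (ta j) (tb j)) (fun j => 2 ^ (k + j)) m (Q1 i)
      with hQ2def
  set Q3 : ℕ → PowerSeries R := fun i =>
    (Lop (ta i) (tb i) (ta (k - 1)) (tb (k - 1)))^[M] (Q2 i (k - 1)) with hQ3def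
  have key : ∀ i,
      (Dop (ta (k - 1)) (tb (k - 1)))^[M]
        (iterOpsE (fun j => Dop (ta j) (tb j)) (fun j => 2 ^ (k + j)) (k - 1)
          (iterOpsE (fun j => Dop (a j) (b j)) (fun j => 2 ^ j) k
            (PowerSeries.C (tw i) * expAB (ta i) (tb i))))
      = Q3 i * expAB (ta i) (tb i) := by
    intro i
    rw [iterOpsE_mul_expAB, iterOpsE_mul_expAB, Dop_iter_mul_expAB]
  -- tracking stage 1
  have hQ1 : ∀ i, Bdd (2 ^ k - 1) (Q1 i) ∧
      PowerSeries.coeff (2 ^ k - 1) (Q1 i)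
        = (∏ j ∈ Finset.range k, (tb i - b j) ^ (2 ^ j)) * tw i := by
    intro i
    have h := iterOpsE_Lop_track (ta i) (tb i) a b (fun j => 2 ^ j) (Bdd_C (tw i)) k
    rw [zero_add, sum_two_pow, PowerSeries.coeff_zero_C] at h
    exact h
  -- tracking stage 2 (partial)
  have hQ2 : ∀ i m, Bdd (2 ^ (k + m) - 1) (Q2 i m) ∧
      PowerSeries.coeff (2 ^ (k + m) - 1) (Q2 i m)
        = (∏ j ∈ Finset.range m, (tb i - tb j) ^ (2 ^ (k + j)))
            * PowerSeries.coeff (2 ^ k - 1) (Q1 i) := by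
    intro i m
    have h := iterOpsE_Lop_track (ta i) (tb i) ta tb (fun j => 2 ^ (k + j)) (hQ1 i).1 m
    rw [sum_two_pow_shift] at h
    exact h
  rw [iterOpsE_Dop_sum, iterOpsE_Dop_sum, Dop_iter_sum, map_sum]
  rw [Finset.sum_eq_single (k - 1)]
  · -- the surviving term
    rw [key (k - 1), map_mul, constantCoeff_expAB, mul_one,
      ← PowerSeries.coeff_zero_eq_constantCoeff_apply]
    have hmatch : Q3 (k - 1) = PowerSeries.derivativeFun^[M] (Q2 (k - 1) (k - 1)) := by
      rw [hQ3def]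
      simp only [Lop_matched]
    have hMeq : 2 ^ (k + (k - 1)) - 1 = M := by
      rw [hMdef, show k + (k - 1) = 2 * k - 1 by omega]
    obtain ⟨_, h2⟩ := hQ2 (k - 1) (k - 1)
    rw [hMeq] at h2
    rw [hmatch, coeff_zero_deriv_iter, h2, (hQ1 (k - 1)).2]
    ring
  · -- other terms vanish
    intro i hi hne
    have hik : i < k - 1 := by
      have := Finset.mem_range.mp hi
      omega
    have hz : Q2 i (i + 1) = 0 := by
      have hbdd := (hQ2 i i).1
      rw [hQ2def]
      simp only [iterOpsE, Function.comp_apply]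
      rw [Lop_matched]
      exact deriv_iter_zero hbdd (by have := Nat.one_le_two_pow (n := k + i); omega)
    have hz2 : Q2 i (k - 1) = 0 :=
      iterOpsE_eq_zero (fun j => Lop_zero _ _ _ _) (by omega) hz
    have hz3 : Q3 i = 0 := by
      rw [hQ3def]
      simp only [hz2]
      exact Function.iterate_fixed (Lop_zero _ _ _ _) M
    rw [key i, hz3, zero_mul, map_zero]
  · intro h
    exact absurd (Finset.mem_range.mpr (by omega)) h
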